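/- Let e ≥ 2, and let d, z be integers. Let M be the e × e integer matrix with M(i,i) = z for all i, M(i,i+1) = d for 0 ≤ i ≤ e−2, M(e−1,0) = 1, and all other entries 0. Then for every n ≥ 0 and all indices 0 ≤ i, j ≤ e−1, the (i,j) entry of M^n equals μ_n(e, (i−j) mod e, d, z) if i ≥ j, and equals d · μ_n(e, (i−j) mod e, d, z) if i < j. In particular, for e = 3 the matrix [[z,d,0],[0,z,d],[1,0,z]]^n equals [[μ_n(3,0,d,z), d·μ_n(3,2,d,z), d·μ_n(3,1,d,z)], [μ_n(3,1,d,z), μ_n(3,0,d,z), d·μ_n(3,2,d,z)], [μ_n(3,2,d,z), μ_n(3,1,d,z), μ_n(3,0,d,z)]]. -/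

import Mathlib

/-- The generalized Rédei polynomials
`μ_n(e,k,d,z) = Σ_{h=0}^{n} C(n, e·h − k) · d^{(e−1)h − k} · z^{n − e·h + k}`,
where the binomial coefficient is `0` when `e·h − k < 0` or `e·h − k > n`. -/
def mu (e k : ℕ) (d z : ℤ) (n : ℕ) : ℤ :=
  ∑ h ∈ Finset.range (n + 1),
    if k ≤ e * h then
      (n.choose (e * h - k) : ℤ) * d ^ ((e - 1) * h - k) * z ^ (n + k - e * h)
    else 0

lemma mu_zero (e k : ℕ) (d z : ℤ) : mu e k d z 0 = if k = 0 then 1 else 0 := by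
  simp [mu]
  rcases k with _ | k <;> simp

lemma mu_succ (e : ℕ) (he : 2 ≤ e) (k : ℕ) (hk : k < e) (d z : ℤ) (n : ℕ) :
    mu e k d z (n + 1) =
      z * mu e k d z n +
        (if k + 1 = e then mu e 0 d z n else d * mu e (k + 1) d z n) := by
  have hA : ∀ h ∈ Finset.range (n + 2),
      (if k ≤ e * h then
        ((n+1).choose (e * h - k) : ℤ) * d ^ ((e - 1) * h - k) * z ^ (n + 1 + k - e * h)
      else 0) =
      ((if k ≤ e * h then
        (n.choose (e * h - k) : ℤ) * d ^ ((e - 1) * h - k) * z ^ (n + 1 + k - e * h)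
      else 0) +
      (if k + 1 ≤ e * h then
        (n.choose (e * h - (k+1)) : ℤ) * d ^ ((e - 1) * h - k) * z ^ (n + 1 + k - e * h)
      else 0)) := by
    intro h _
    by_cases h1 : k ≤ e * h
    · by_cases h2 : k + 1 ≤ e * h
      · rw [if_pos h1, if_pos h1, if_pos h2]
        have h3 : e * h - k = (e * h - (k+1)) + 1 := by omega
        rw [h3, Nat.choose_succ_succ']
        push_cast
        ring
      · have h4 : e * h = k := by omega
        rw [if_pos h1, if_pos h1, if_neg h2]
        simp [h4]
    · have h2 : ¬ (k + 1 ≤ e * h) := by omega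
      rw [if_neg h1, if_neg h1, if_neg h2]
      simp
  rw [show mu e k d z (n+1) = ∑ h ∈ Finset.range (n + 2),
      (if k ≤ e * h then
        ((n+1).choose (e * h - k) : ℤ) * d ^ ((e - 1) * h - k) * z ^ (n + 1 + k - e * h)
      else 0) from rfl]
  rw [Finset.sum_congr rfl hA, Finset.sum_add_distrib]
  congr 1
  · -- first sum = z * mu e k d z n
    rw [Finset.sum_range_succ]
    have htop : n < e * (n+1) - k := by
      have h5 : e * (n+1) = e * n + e := by ring
      have h6 : n ≤ e * n := Nat.le_mul_of_pos_left _ (by omega)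
      omega
    have hz : (if k ≤ e * (n+1) then
        (n.choose (e * (n+1) - k) : ℤ) * d ^ ((e - 1) * (n+1) - k) * z ^ (n + 1 + k - e * (n+1))
      else 0) = 0 := by
      split
      · rw [Nat.choose_eq_zero_of_lt htop]; simp
      · rfl
    rw [hz, add_zero, mu, Finset.mul_sum]
    refine Finset.sum_congr rfl fun h _ => ?_
    by_cases h1 : k ≤ e * h
    · rw [if_pos h1, if_pos h1]
      by_cases h2 : e * h - k ≤ n
      · have h3 : n + 1 + k - e * h = (n + k - e * h) + 1 := by omega
        rw [h3, pow_succ]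
        ring
      · rw [Nat.choose_eq_zero_of_lt (by omega)]
        simp
    · simp [h1]
  · -- second sum
    by_cases hke : k + 1 = e
    · rw [if_pos hke]
      rw [Finset.sum_range_succ']
      have h0 : ¬ (k + 1 ≤ e * 0) := by omega
      rw [if_neg h0, add_zero, mu]
      refine Finset.sum_congr rfl fun h _ => ?_
      have hme : e * (h + 1) = e * h + e := by ring
      have hm1 : (e - 1) * (h + 1) = (e - 1) * h + (e - 1) := by ring
      have h1 : k + 1 ≤ e * (h + 1) := by omega
      rw [if_pos h1]
      have e1 : e * (h + 1) - (k + 1) = e * h := by omega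
      have e2 : (e - 1) * (h + 1) - k = (e - 1) * h := by omega
      have e3 : n + 1 + k - e * (h + 1) = n - e * h := by omega
      rw [e1, e2, e3]
      simp
    · rw [if_neg hke]
      rw [Finset.sum_range_succ]
      have hme : e * (n + 1) = e * n + e := by ring
      have htop : n < e * (n+1) - (k+1) := by
        have h6 : n ≤ e * n := Nat.le_mul_of_pos_left _ (by omega)
        omega
      have hz : (if k + 1 ≤ e * (n+1) then
          (n.choose (e * (n+1) - (k+1)) : ℤ) * d ^ ((e - 1) * (n+1) - k) * z ^ (n + 1 + k - e * (n+1))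
        else 0) = 0 := by
        split
        · rw [Nat.choose_eq_zero_of_lt htop]; simp
        · rfl
      rw [hz, add_zero, mu, Finset.mul_sum]
      refine Finset.sum_congr rfl fun h _ => ?_
      by_cases h1 : k + 1 ≤ e * h
      · rw [if_pos h1, if_pos h1]
        have hh : 1 ≤ h := by
          by_contra hh
          have : h = 0 := by omega
          subst this
          omega
        have hd : k + 1 ≤ (e - 1) * h := by
          calc k + 1 ≤ (e - 1) * 1 := by omega
          _ ≤ (e - 1) * h := Nat.mul_le_mul_left _ hh
        have e2 : (e - 1) * h - k = ((e - 1) * h - (k + 1)) + 1 := by omega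
        have e3 : n + 1 + k - e * h = n + (k + 1) - e * h := by omega
        rw [e2, e3, pow_succ]
        ring
      · simp [h1]

lemma step (e : ℕ) (he : 2 ≤ e) (d z : ℤ)
    (M : Matrix (Fin e) (Fin e) ℤ)
    (hM : ∀ i j : Fin e, M i j =
      if i = j then z
      else if (j : ℕ) = (i : ℕ) + 1 then d
      else if (i : ℕ) = e - 1 ∧ (j : ℕ) = 0 then 1
      else 0)
    (i : Fin e) (f : Fin e → ℤ) :
    ∑ l, M i l * f l =
      z * f i + (if h : (i : ℕ) + 1 < e then d * f ⟨(i : ℕ) + 1, h⟩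
        else f ⟨0, by omega⟩) := by
  have key : ∀ l : Fin e, M i l * f l =
      (if i = l then z * f l else 0) +
      ((if (l : ℕ) = (i : ℕ) + 1 then d * f l else 0) +
       (if (i : ℕ) = e - 1 ∧ (l : ℕ) = 0 then f l else 0)) := by
    intro l
    rw [hM]
    have hi := i.isLt
    have hl := l.isLt
    rcases eq_or_ne i l with h1 | h1
    · subst h1
      rw [if_pos rfl, if_pos rfl, if_neg (show ¬ ((i:ℕ) = (i:ℕ)+1) by omega),
        if_neg (show ¬ ((i:ℕ) = e-1 ∧ (i:ℕ) = 0) by omega)]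
      ring
    · rw [if_neg h1, if_neg h1]
      by_cases h2 : (l:ℕ) = (i:ℕ)+1
      · rw [if_pos h2, if_pos h2,
          if_neg (show ¬ ((i:ℕ) = e-1 ∧ (l:ℕ) = 0) by omega)]
        ring
      · rw [if_neg h2, if_neg h2]
        by_cases h3 : (i:ℕ) = e-1 ∧ (l:ℕ) = 0
        · rw [if_pos h3, if_pos h3]; ring
        · rw [if_neg h3, if_neg h3]; ring
  rw [Finset.sum_congr rfl (fun l _ => key l), Finset.sum_add_distrib,
    Finset.sum_add_distrib]
  congr 1
  · rw [Finset.sum_ite_eq]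
    simp
  · have hi := i.isLt
    by_cases h : (i : ℕ) + 1 < e
    · rw [dif_pos h]
      have h2 : ∑ l : Fin e, (if (l : ℕ) = (i : ℕ) + 1 then d * f l else 0)
          = d * f ⟨(i : ℕ) + 1, h⟩ := by
        rw [Finset.sum_eq_single (⟨(i : ℕ) + 1, h⟩ : Fin e)
          (fun b _ hb => if_neg fun hc => hb (Fin.ext hc))
          (fun hc => absurd (Finset.mem_univ _) hc)]
        rw [if_pos rfl]
      have h3 : ∑ l : Fin e, (if (i : ℕ) = e - 1 ∧ (l : ℕ) = 0 then f l else 0)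
          = 0 := by
        apply Finset.sum_eq_zero
        intro l _
        rw [if_neg]
        rintro ⟨h4, -⟩
        omega
      rw [h2, h3, add_zero]
    · rw [dif_neg h]
      have h2 : ∑ l : Fin e, (if (l : ℕ) = (i : ℕ) + 1 then d * f l else 0)
          = 0 := by
        apply Finset.sum_eq_zero
        intro l _
        rw [if_neg]
        have := l.isLt
        omega
      have h3 : ∑ l : Fin e, (if (i : ℕ) = e - 1 ∧ (l : ℕ) = 0 then f l else 0)
          = f ⟨0, by omega⟩ := by
        rw [Finset.sum_eq_single (⟨0, by omega⟩ : Fin e)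
          (fun b _ hb => if_neg fun hc => hb (Fin.ext hc.2))
          (fun hc => absurd (Finset.mem_univ _) hc)]
        rw [if_pos ⟨by omega, rfl⟩]
      rw [h2, h3, zero_add]

lemma val_sub (e : ℕ) (he : 2 ≤ e) (i j : Fin e) :
    ((i - j : Fin e) : ℕ) =
      if (j : ℕ) ≤ (i : ℕ) then (i : ℕ) - (j : ℕ) else e + (i : ℕ) - (j : ℕ) := by
  have hi := i.isLt
  have hj := j.isLt
  rw [Fin.sub_def]
  show (e - (j : ℕ) + (i : ℕ)) % e = _
  split_ifs with h
  · have h1 : e - (j : ℕ) + (i : ℕ) = ((i : ℕ) - (j : ℕ)) + e := by omega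
    rw [h1, Nat.add_mod_right, Nat.mod_eq_of_lt (by omega)]
  · rw [Nat.mod_eq_of_lt (by omega)]
    omega


/-- Let `M` be the `e × e` integer matrix with `z` on the diagonal, `d` on the
superdiagonal, `1` in the lower-left corner and zeros elsewhere.  Then the
`(i,j)` entry of `M^n` equals `μ_n(e, (i−j) mod e, d, z)` when `i ≥ j`, and
`d · μ_n(e, (i−j) mod e, d, z)` when `i < j`  (here `(i−j) mod e` is computed
via subtraction in `Fin e`). -/
theorem pow_entries_eq_mu (e : ℕ) (he : 2 ≤ e) (d z : ℤ)
    (M : Matrix (Fin e) (Fin e) ℤ)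
    (hM : ∀ i j : Fin e, M i j =
      if i = j then z
      else if (j : ℕ) = (i : ℕ) + 1 then d
      else if (i : ℕ) = e - 1 ∧ (j : ℕ) = 0 then 1
      else 0)
    (n : ℕ) (i j : Fin e) :
    (M ^ n) i j =
      if (j : ℕ) ≤ (i : ℕ) then mu e ((i - j : Fin e) : ℕ) d z n
      else d * mu e ((i - j : Fin e) : ℕ) d z n := by
  induction n generalizing i j with
  | zero =>
    rw [pow_zero, Matrix.one_apply]
    by_cases hij : i = j
    · rw [if_pos hij, hij, if_pos (le_refl _)]
      have h0 : ((j - j : Fin e) : ℕ) = 0 := by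
        rw [val_sub e he, if_pos (le_refl _)]
        omega
      rw [h0, mu_zero, if_pos rfl]
    · rw [if_neg hij]
      have hne : (i : ℕ) ≠ (j : ℕ) := fun hc => hij (Fin.ext hc)
      have hi := i.isLt
      have hj := j.isLt
      have h0 : ((i - j : Fin e) : ℕ) ≠ 0 := by
        rw [val_sub e he]
        split_ifs <;> omega
      rw [mu_zero, if_neg h0]
      split <;> ring
  | succ n ih =>
    have hi := i.isLt
    have hj := j.isLt
    rw [pow_succ', Matrix.mul_apply, step e he d z M hM i (fun l => (M ^ n) l j)]
    have hK : ((i - j : Fin e) : ℕ) < e := (i - j).isLt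
    have hv := val_sub e he i j
    by_cases hie : (i : ℕ) + 1 < e
    · rw [dif_pos hie, ih i j, ih ⟨(i : ℕ) + 1, hie⟩ j]
      have hv' := val_sub e he ⟨(i : ℕ) + 1, hie⟩ j
      simp only [Fin.val_mk] at hv' ⊢
      rcases lt_trichotomy (j : ℕ) ((i : ℕ) + 1) with hc | hc | hc
      · have hji : (j : ℕ) ≤ (i : ℕ) := by omega
        rw [if_pos hji, if_pos (by omega : (j : ℕ) ≤ (i : ℕ) + 1), if_pos hji]
        have hk' : ((⟨(i : ℕ) + 1, hie⟩ - j : Fin e) : ℕ) = ((i - j : Fin e) : ℕ) + 1 := by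
          rw [hv', hv, if_pos hji, if_pos (by omega)]
          omega
        rw [hk', mu_succ e he _ hK d z n,
          if_neg (show ¬ ((i - j : Fin e) : ℕ) + 1 = e by rw [hv, if_pos hji]; omega)]
      · have hji : ¬ (j : ℕ) ≤ (i : ℕ) := by omega
        rw [if_neg hji, if_pos (by omega : (j : ℕ) ≤ (i : ℕ) + 1), if_neg hji]
        have hk1 : ((i - j : Fin e) : ℕ) = e - 1 := by rw [hv, if_neg hji]; omega
        have hk2 : ((⟨(i : ℕ) + 1, hie⟩ - j : Fin e) : ℕ) = 0 := by
          rw [hv', if_pos (by omega)]; omega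
        rw [hk1, hk2, mu_succ e he (e - 1) (by omega) d z n, if_pos (by omega)]
        ring
      · have hji : ¬ (j : ℕ) ≤ (i : ℕ) := by omega
        rw [if_neg hji, if_neg (by omega : ¬ (j : ℕ) ≤ (i : ℕ) + 1), if_neg hji]
        have hk' : ((⟨(i : ℕ) + 1, hie⟩ - j : Fin e) : ℕ) = ((i - j : Fin e) : ℕ) + 1 := by
          rw [hv', hv, if_neg hji, if_neg (by omega)]
          omega
        rw [hk', mu_succ e he _ hK d z n,
          if_neg (show ¬ ((i - j : Fin e) : ℕ) + 1 = e by rw [hv, if_neg hji]; omega)]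
        ring
    · have hie' : (i : ℕ) = e - 1 := by omega
      rw [dif_neg hie, ih i j, ih ⟨0, by omega⟩ j]
      have hv' := val_sub e he ⟨0, by omega⟩ j
      simp only [Fin.val_mk] at hv' ⊢
      have hji : (j : ℕ) ≤ (i : ℕ) := by omega
      rw [if_pos hji, if_pos hji]
      by_cases hj0 : (j : ℕ) = 0
      · rw [if_pos (by omega : (j : ℕ) ≤ 0)]
        have hk1 : ((i - j : Fin e) : ℕ) = e - 1 := by rw [hv, if_pos hji]; omega
        have hk2 : ((⟨0, by omega⟩ - j : Fin e) : ℕ) = 0 := by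
          rw [hv', if_pos (by omega)]; omega
        rw [hk1, hk2, mu_succ e he (e - 1) (by omega) d z n]
        rw [if_pos (show e - 1 + 1 = e by omega)]
      · rw [if_neg (by omega : ¬ (j : ℕ) ≤ 0)]
        have hk' : ((⟨0, by omega⟩ - j : Fin e) : ℕ) = ((i - j : Fin e) : ℕ) + 1 := by
          rw [hv', hv, if_neg (by omega), if_pos hji]
          omega
        rw [hk', mu_succ e he _ hK d z n,
          if_neg (show ¬ ((i - j : Fin e) : ℕ) + 1 = e by rw [hv, if_pos hji]; omega)]
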